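/- Let f : Primes → ℕ be a function whose zero set S = f^{-1}(0) is thin (i.e. ∑_{a ∈ ⟨S⟩} a^{-σ} converges for some σ < 1). Then the infinite product λ_f = ∏_p (1 - 1/((p-1) p^{f(p)})) converges, and if f(2) > 0 then λ_f > 0. -/

import Mathlib

open scoped Classical

/-- `IsSNumber S m` : `m` is a positive integer all of whose prime factors lie in `S`. -/
def IsSNumber (S : Set ℕ) (m : ℕ) : Prop :=
  0 < m ∧ ∀ p : ℕ, p.Prime → p ∣ m → p ∈ S

/-- A set `S` of primes is thin if `∑_{a ∈ ⟨S⟩} a^{-σ}` converges for some `σ < 1`. -/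
def IsThin (S : Set ℕ) : Prop :=
  ∃ σ : ℝ, σ < 1 ∧ Summable fun a : ℕ => if IsSNumber S a then (a : ℝ) ^ (-σ) else 0

theorem stmt5 (f : ℕ → ℕ) (hthin : IsThin {p : ℕ | p.Prime ∧ f p = 0}) :
    Multipliable (fun p : Nat.Primes =>
      (1 - 1 / ((((p : ℕ) : ℝ) - 1) * ((p : ℕ) : ℝ) ^ (f (p : ℕ))) : ℝ)) ∧
    (0 < f 2 → 0 < ∏' p : Nat.Primes,
      (1 - 1 / ((((p : ℕ) : ℝ) - 1) * ((p : ℕ) : ℝ) ^ (f (p : ℕ))) : ℝ)) := by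
  obtain ⟨σ, hσ, hsum⟩ := hthin
  set S : Set ℕ := {p : ℕ | p.Prime ∧ f p = 0} with hS
  set x : Nat.Primes → ℝ :=
    fun p => 1 / ((((p : ℕ) : ℝ) - 1) * ((p : ℕ) : ℝ) ^ (f (p : ℕ))) with hxdef
  have hp2 : ∀ p : Nat.Primes, (2 : ℝ) ≤ ((p : ℕ) : ℝ) := fun p => by
    exact_mod_cast p.2.two_le
  have hpow1 : ∀ p : Nat.Primes, (1 : ℝ) ≤ ((p : ℕ) : ℝ) ^ (f (p : ℕ)) := fun p =>
    one_le_pow₀ (by linarith [hp2 p])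
  have hd1 : ∀ p : Nat.Primes,
      (1 : ℝ) ≤ (((p : ℕ) : ℝ) - 1) * ((p : ℕ) : ℝ) ^ (f (p : ℕ)) := fun p => by
    have h1 : (1 : ℝ) ≤ ((p : ℕ) : ℝ) - 1 := by linarith [hp2 p]
    nlinarith [hpow1 p]
  have hx0 : ∀ p, 0 ≤ x p := fun p => by
    have := hd1 p
    positivity
  have hx1 : ∀ p, x p ≤ 1 := fun p => by
    rw [hxdef]
    simp only
    rw [div_le_one (by linarith [hd1 p])]
    exact hd1 p
  -- summability of x
  have hinj : Function.Injective (fun p : Nat.Primes => (p : ℕ)) :=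
    Nat.Primes.coe_nat_injective
  have hxs : Summable x := by
    have hb : Summable (fun p : Nat.Primes =>
        2 * ((if IsSNumber S (p : ℕ) then ((p : ℕ) : ℝ) ^ (-σ) else 0)
          + ((p : ℕ) : ℝ) ^ (-2 : ℝ))) := by
      apply Summable.mul_left
      apply Summable.add
      · exact hsum.comp_injective hinj
      · exact (Real.summable_nat_rpow.mpr (by norm_num)).comp_injective hinj
    apply Summable.of_nonneg_of_le hx0 _ hb
    intro p
    have hq2 := hp2 p
    by_cases hf : f (p : ℕ) = 0
    · have hSn : IsSNumber S (p : ℕ) := by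
        refine ⟨p.2.pos, fun q hq hdvd => ?_⟩
        have : q = (p : ℕ) := (Nat.prime_dvd_prime_iff_eq hq p.2).mp hdvd
        subst this
        exact ⟨p.2, hf⟩
      rw [if_pos hSn]
      have hxp : x p = 1 / (((p : ℕ) : ℝ) - 1) := by
        rw [hxdef]; simp [hf]
      have h1 : 1 / (((p : ℕ) : ℝ) - 1) ≤ 2 / ((p : ℕ) : ℝ) := by
        rw [div_le_div_iff₀ (by linarith) (by linarith)]
        linarith
      have h2 : (2 : ℝ) / ((p : ℕ) : ℝ) ≤ 2 * ((p : ℕ) : ℝ) ^ (-σ) := by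
        have : ((p : ℕ) : ℝ) ^ (-1 : ℝ) ≤ ((p : ℕ) : ℝ) ^ (-σ) :=
          Real.rpow_le_rpow_of_exponent_le (by linarith) (by linarith)
        rw [Real.rpow_neg_one] at this
        rw [div_eq_mul_inv]
        linarith
      have h3 : (0 : ℝ) ≤ ((p : ℕ) : ℝ) ^ (-2 : ℝ) := Real.rpow_nonneg (by linarith) _
      rw [hxp]
      linarith
    · have hf1 : 1 ≤ f (p : ℕ) := Nat.one_le_iff_ne_zero.mpr hf
      have hq0 : (0 : ℝ) < ((p : ℕ) : ℝ) := by linarith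
      have hpow : ((p : ℕ) : ℝ) ≤ ((p : ℕ) : ℝ) ^ (f (p : ℕ)) := by
        calc ((p : ℕ) : ℝ) = ((p : ℕ) : ℝ) ^ 1 := (pow_one _).symm
        _ ≤ _ := pow_le_pow_right₀ (by linarith) hf1
      have hd : ((p : ℕ) : ℝ) ^ 2 / 2 ≤ (((p : ℕ) : ℝ) - 1) * ((p : ℕ) : ℝ) ^ (f (p : ℕ)) := by
        have h1 : ((p : ℕ) : ℝ) / 2 ≤ ((p : ℕ) : ℝ) - 1 := by linarith
        nlinarith
      have hxle : x p ≤ 2 / ((p : ℕ) : ℝ) ^ 2 := by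
        rw [hxdef]
        simp only
        rw [div_le_div_iff₀ (by linarith [hd1 p]) (by positivity)]
        nlinarith
      have h4 : (2 : ℝ) / ((p : ℕ) : ℝ) ^ 2 = 2 * ((p : ℕ) : ℝ) ^ (-2 : ℝ) := by
        rw [Real.rpow_neg (by linarith), div_eq_mul_inv]
        congr 2
        rw [← Real.rpow_natCast ((p : ℕ) : ℝ) 2]
        norm_num
      have h5 : (0 : ℝ) ≤ (if IsSNumber S (p : ℕ) then ((p : ℕ) : ℝ) ^ (-σ) else 0) := by
        split
        · exact Real.rpow_nonneg (by linarith) _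
        · exact le_rfl
      calc x p ≤ 2 / ((p : ℕ) : ℝ) ^ 2 := hxle
      _ = 2 * ((p : ℕ) : ℝ) ^ (-2 : ℝ) := h4
      _ ≤ _ := by linarith
  by_cases h2 : f 2 = 0
  · constructor
    · refine ⟨0, ?_⟩
      rw [HasProd]
      apply Filter.Tendsto.congr' _ tendsto_const_nhds
      filter_upwards [Filter.eventually_ge_atTop {(⟨2, Nat.prime_two⟩ : Nat.Primes)}] with s hs
      symm
      apply Finset.prod_eq_zero (hs (Finset.mem_singleton_self _))
      simp [h2]
      norm_num
    · intro hc
      exact absurd h2 hc.ne'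
  · -- all factors in [1/2, 1]
    have hxh : ∀ p, x p ≤ 1 / 2 := by
      intro p
      have hq2 := hp2 p
      have hd : (2 : ℝ) ≤ (((p : ℕ) : ℝ) - 1) * ((p : ℕ) : ℝ) ^ (f (p : ℕ)) := by
        by_cases hf : f (p : ℕ) = 0
        · have hne : (p : ℕ) ≠ 2 := fun h => h2 (h ▸ hf)
          have : 3 ≤ (p : ℕ) := by
            have := p.2.two_le
            omega
          have h3 : (3 : ℝ) ≤ ((p : ℕ) : ℝ) := by exact_mod_cast this
          simp only [hf, pow_zero, mul_one]
          linarith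
        · have hf1 : 1 ≤ f (p : ℕ) := Nat.one_le_iff_ne_zero.mpr hf
          have hpow : ((p : ℕ) : ℝ) ≤ ((p : ℕ) : ℝ) ^ (f (p : ℕ)) := by
            calc ((p : ℕ) : ℝ) = ((p : ℕ) : ℝ) ^ 1 := (pow_one _).symm
            _ ≤ _ := pow_le_pow_right₀ (by linarith) hf1
          nlinarith
      rw [hxdef]
      simp only
      rw [div_le_div_iff₀ (by linarith) (by norm_num)]
      linarith
    have hgpos : ∀ p : Nat.Primes, (0 : ℝ) < 1 - x p := fun p => by linarith [hxh p]
    have hlog : Summable (fun p : Nat.Primes => Real.log (1 - x p)) := by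
      apply Summable.of_norm_bounded (hxs.mul_left 2)
      intro p
      have hg := hgpos p
      have hle : Real.log (1 - x p) ≤ 0 :=
        Real.log_nonpos (by linarith) (by linarith [hx0 p])
      have hlb : -Real.log (1 - x p) ≤ 1 / (1 - x p) - 1 := by
        have := Real.log_le_sub_one_of_pos (show (0:ℝ) < 1 / (1 - x p) by positivity)
        rwa [Real.log_div one_ne_zero (by linarith), Real.log_one, zero_sub] at this
      have h12 : (1 : ℝ) / 2 ≤ 1 - x p := by linarith [hxh p]
      have : 1 / (1 - x p) - 1 ≤ 2 * x p := by
        rw [sub_le_iff_le_add, div_le_iff₀ hg]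
        nlinarith [hx0 p, hxh p]
      rw [Real.norm_eq_abs, abs_of_nonpos hle]
      linarith
    have hmult : Multipliable (fun p : Nat.Primes => (1 - x p : ℝ)) :=
      Real.multipliable_of_summable_log hgpos hlog
    refine ⟨hmult, fun _ => ?_⟩
    have heq := Real.rexp_tsum_eq_tprod (f := fun p => (1 - x p : ℝ)) hgpos hlog
    rw [← heq]
    exact Real.exp_pos _
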